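/- For every N ≥ 2, the intersection P̄ ∩ H̄ of the 2N-dimensional crosspolytope with the codimension-2 subspace H̄ equals the convex hull of the finite set V̄. -/
import Mathlib


open Finset

/-- The crosspolytope in `ℝ^{2N}`, identified with functions `Fin N × Fin 2 → ℝ`. -/
def crossPolytope2 (N : ℕ) : Set (Fin N × Fin 2 → ℝ) := {x | ∑ il, |x il| ≤ 1}

/-- The codimension-2 subspace `H̄ = {x : ∑_i x(i,j) = 0 for j = 1,2}`. -/
def subspaceHbar (N : ℕ) : Set (Fin N × Fin 2 → ℝ) :=
  {x | ∀ j : Fin 2, ∑ i, x (i, j) = 0}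

/-- The vertex set `V̄` of vectors `v_{p,q,j}` with `p ≠ q`, `j ∈ {1,2}`. -/
def vertexSetVbar (N : ℕ) : Set (Fin N × Fin 2 → ℝ) :=
  {v | ∃ p q : Fin N, ∃ j : Fin 2, p ≠ q ∧
    v = fun il => if il = (p, j) then (1 / 2 : ℝ) else if il = (q, j) then -(1 / 2 : ℝ) else 0}

theorem crossPolytope2_inter_subspace_eq_convexHull (N : ℕ) (hN : 2 ≤ N) :
    crossPolytope2 N ∩ subspaceHbar N = convexHull ℝ (vertexSetVbar N) := by
  apply Set.Subset.antisymm
  · -- hard direction: the intersection is contained in the convex hull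
    rintro x ⟨hx1, hx2⟩
    simp only [crossPolytope2, Set.mem_setOf_eq] at hx1
    simp only [subspaceHbar, Set.mem_setOf_eq] at hx2
    -- positive and negative parts, column abs-sums
    set P : Fin N → Fin 2 → ℝ := fun i j => max (x (i, j)) 0 with hPdef
    set M : Fin N → Fin 2 → ℝ := fun i j => max (-(x (i, j))) 0 with hMdef
    set s : Fin 2 → ℝ := fun j => ∑ i, |x (i, j)| with hsdef
    have hPnn : ∀ i j, 0 ≤ P i j := fun i j => le_max_right _ _
    have hMnn : ∀ i j, 0 ≤ M i j := fun i j => le_max_right _ _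
    have hPM1 : ∀ i j, P i j - M i j = x (i, j) := by
      intro i j
      simp only [hPdef, hMdef]
      rcases le_total (x (i, j)) 0 with h | h
      · rw [max_eq_right h, max_eq_left (by linarith : (0:ℝ) ≤ -x (i, j))]; ring
      · rw [max_eq_left h, max_eq_right (by linarith : -x (i, j) ≤ 0)]; ring
    have hPM2 : ∀ i j, P i j + M i j = |x (i, j)| := by
      intro i j
      simp only [hPdef, hMdef]
      rcases le_total (x (i, j)) 0 with h | h
      · rw [max_eq_right h, max_eq_left (by linarith : (0:ℝ) ≤ -x (i, j)), abs_of_nonpos h]; ring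
      · rw [max_eq_left h, max_eq_right (by linarith : -x (i, j) ≤ 0), abs_of_nonneg h]; ring
    have hPMzero : ∀ i j, P i j * M i j = 0 := by
      intro i j
      rcases le_total (x (i, j)) 0 with h | h
      · have : P i j = 0 := max_eq_right h
        simp [this]
      · have : M i j = 0 := max_eq_right (by linarith)
        simp [this]
    have hsP : ∀ j, ∑ i, P i j = s j / 2 := by
      intro j
      have e1 : ∑ i, P i j - ∑ i, M i j = 0 := by
        rw [← Finset.sum_sub_distrib]
        rw [Finset.sum_congr rfl (fun i _ => hPM1 i j)]
        exact hx2 j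
      have e2 : ∑ i, P i j + ∑ i, M i j = s j := by
        rw [← Finset.sum_add_distrib]
        exact Finset.sum_congr rfl (fun i _ => hPM2 i j)
      linarith
    have hsM : ∀ j, ∑ i, M i j = s j / 2 := by
      intro j
      have e1 : ∑ i, P i j - ∑ i, M i j = 0 := by
        rw [← Finset.sum_sub_distrib]
        rw [Finset.sum_congr rfl (fun i _ => hPM1 i j)]
        exact hx2 j
      linarith [hsP j]
    have hsnn : ∀ j, 0 ≤ s j := fun j => Finset.sum_nonneg fun i _ => abs_nonneg _
    have hszero : ∀ j, s j = 0 → ∀ i, P i j = 0 ∧ M i j = 0 := by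
      intro j hj i
      have hx0 : |x (i, j)| = 0 := by
        have := (Finset.sum_eq_zero_iff_of_nonneg (fun i _ => abs_nonneg (x (i, j)))).mp hj
        exact this i (Finset.mem_univ i)
      have : x (i, j) = 0 := abs_eq_zero.mp hx0
      constructor <;> simp [hPdef, hMdef, this]
    have ht : s 0 + s 1 ≤ 1 := by
      have : ∑ il : Fin N × Fin 2, |x il| = s 0 + s 1 := by
        rw [Fintype.sum_prod_type]
        rw [hsdef]
        simp only [Fin.sum_univ_two]
        rw [Finset.sum_add_distrib]
      linarith [hx1, this]
    -- the two padding vertex indices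
    have h01 : (⟨0, by omega⟩ : Fin N) ≠ (⟨1, by omega⟩ : Fin N) := by
      simp [Fin.ext_iff]
    set c₁ : Fin N × Fin N × Fin 2 := (⟨0, by omega⟩, ⟨1, by omega⟩, 0) with hc₁
    set c₂ : Fin N × Fin N × Fin 2 := (⟨1, by omega⟩, ⟨0, by omega⟩, 0) with hc₂
    set t : ℝ := s 0 + s 1 with htdef
    set w : Fin N × Fin N × Fin 2 → ℝ := fun pqj =>
      4 * P pqj.1 pqj.2.2 * M pqj.2.1 pqj.2.2 / s pqj.2.2
        + (if pqj = c₁ then (1 - t) / 2 else 0)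
        + (if pqj = c₂ then (1 - t) / 2 else 0) with hwdef
    set v : Fin N × Fin N × Fin 2 → (Fin N × Fin 2 → ℝ) := fun pqj il =>
      if il = (pqj.1, pqj.2.2) then (1 / 2 : ℝ) else
        if il = (pqj.2.1, pqj.2.2) then -(1 / 2 : ℝ) else 0 with hvdef
    set T : Finset (Fin N × Fin N × Fin 2) :=
      Finset.univ.filter (fun pqj => pqj.1 ≠ pqj.2.1) with hTdef
    have hc₁T : c₁ ∈ T := by simp [hTdef, hc₁, h01]
    have hc₂T : c₂ ∈ T := by simp [hTdef, hc₂, h01.symm]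
    have hdiagw : ∀ pqj : Fin N × Fin N × Fin 2, pqj.1 = pqj.2.1 → w pqj = 0 := by
      intro pqj hd
      have h1 : pqj ≠ c₁ := by
        intro h; rw [h] at hd; exact h01 hd
      have h2 : pqj ≠ c₂ := by
        intro h; rw [h] at hd; exact h01 hd.symm
      have : P pqj.1 pqj.2.2 * M pqj.2.1 pqj.2.2 = 0 := by
        rw [hd]; exact hPMzero _ _
      simp [hwdef, h1, h2, mul_assoc, this]
    have hwnn : ∀ pqj, 0 ≤ w pqj := by
      intro pqj
      apply add_nonneg
      apply add_nonneg
      · apply div_nonneg _ (hsnn _)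
        have := hPnn pqj.1 pqj.2.2
        have := hMnn pqj.2.1 pqj.2.2
        positivity
      · split
        · linarith
        · exact le_rfl
      · split
        · linarith
        · exact le_rfl
    -- sums over T equal sums over univ for functions vanishing on the diagonal
    have hTuniv : ∀ f : Fin N × Fin N × Fin 2 → ℝ,
        (∀ pqj, pqj.1 = pqj.2.1 → f pqj = 0) → ∑ pqj ∈ T, f pqj = ∑ pqj, f pqj := by
      intro f hf
      rw [hTdef, Finset.sum_filter]
      apply Finset.sum_congr rfl
      intro pqj _
      by_cases h : pqj.1 = pqj.2.1
      · rw [if_neg (fun hc => hc h), hf pqj h]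
      · rw [if_pos h]
    have hkeyP : ∀ (j : Fin 2) (i : Fin N), ∑ q, 4 * P i j * M q j / s j = 2 * P i j := by
      intro j i
      by_cases hsj : s j = 0
      · simp [(hszero j hsj i).1]
      · have e : ∀ q, 4 * P i j * M q j / s j = (4 * P i j / s j) * M q j := fun q => by ring
        rw [Finset.sum_congr rfl (fun q _ => e q), ← Finset.mul_sum, hsM j]
        field_simp
        ring
    have hkeyM : ∀ (j : Fin 2) (i : Fin N), ∑ p, 4 * P p j * M i j / s j = 2 * M i j := by
      intro j i
      by_cases hsj : s j = 0
      · simp [(hszero j hsj i).2]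
      · have e : ∀ p, 4 * P p j * M i j / s j = (4 * M i j / s j) * P p j := fun p => by ring
        rw [Finset.sum_congr rfl (fun p _ => e p), ← Finset.mul_sum, hsP j]
        field_simp
        ring
    have hbase : ∑ pqj : Fin N × Fin N × Fin 2,
        4 * P pqj.1 pqj.2.2 * M pqj.2.1 pqj.2.2 / s pqj.2.2 = s 0 + s 1 := by
      rw [Fintype.sum_prod_type]
      have e1 : ∀ p : Fin N, ∑ qj : Fin N × Fin 2, 4 * P p qj.2 * M qj.1 qj.2 / s qj.2
          = 2 * P p 0 + 2 * P p 1 := by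
        intro p
        rw [Fintype.sum_prod_type]
        simp only [Fin.sum_univ_two]
        rw [Finset.sum_add_distrib, hkeyP 0 p, hkeyP 1 p]
      rw [Finset.sum_congr rfl (fun p _ => e1 p), Finset.sum_add_distrib,
        ← Finset.mul_sum, ← Finset.mul_sum, hsP 0, hsP 1]
      ring
    have hsumw : ∑ pqj ∈ T, w pqj = 1 := by
      rw [hTuniv w hdiagw, hwdef]
      simp only
      rw [Finset.sum_add_distrib, Finset.sum_add_distrib, hbase,
        Finset.sum_ite_eq' Finset.univ c₁ (fun _ => (1 - t) / 2),
        Finset.sum_ite_eq' Finset.univ c₂ (fun _ => (1 - t) / 2)]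
      simp only [Finset.mem_univ, if_true]
      rw [htdef]
      ring
    have hmem : T.centerMass w v ∈ convexHull ℝ (vertexSetVbar N) := by
      apply Finset.centerMass_mem_convexHull
      · intro pqj _
        exact hwnn pqj
      · rw [hsumw]; norm_num
      · intro pqj hpqj
        rw [hTdef, Finset.mem_filter] at hpqj
        exact ⟨pqj.1, pqj.2.1, pqj.2.2, hpqj.2, by rw [hvdef]⟩
    have hxeq : T.centerMass w v = x := by
      rw [Finset.centerMass, hsumw, inv_one, one_smul]
      funext il
      rw [Finset.sum_apply]
      simp only [Pi.smul_apply, smul_eq_mul]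
      rw [hTuniv (fun pqj => w pqj * v pqj il) (fun pqj h => by
        show w pqj * v pqj il = 0
        rw [hdiagw pqj h, zero_mul])]
      have hterm : ∀ pqj : Fin N × Fin N × Fin 2, w pqj * v pqj il
          = (4 * P pqj.1 pqj.2.2 * M pqj.2.1 pqj.2.2 / s pqj.2.2) * v pqj il
            + ((if pqj = c₁ then (1 - t) / 2 * v pqj il else 0)
            + (if pqj = c₂ then (1 - t) / 2 * v pqj il else 0)) := by
        intro pqj
        rw [hwdef]
        dsimp only
        split_ifs <;> ring
      rw [Finset.sum_congr rfl (fun pqj _ => hterm pqj), Finset.sum_add_distrib,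
        Finset.sum_add_distrib,
        Finset.sum_ite_eq' Finset.univ c₁ (fun pqj => (1 - t) / 2 * v pqj il),
        Finset.sum_ite_eq' Finset.univ c₂ (fun pqj => (1 - t) / 2 * v pqj il)]
      simp only [Finset.mem_univ, if_true]
      have hpadv : v c₁ il + v c₂ il = 0 := by
        rw [hvdef, hc₁, hc₂]
        dsimp only
        by_cases h1 : il = ((⟨0, by omega⟩ : Fin N), (0 : Fin 2))
        · have h2 : il ≠ ((⟨1, by omega⟩ : Fin N), (0 : Fin 2)) := by
            rw [h1]; simp [Prod.ext_iff, Fin.ext_iff]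
          simp [h1, h2]
        · by_cases h2 : il = ((⟨1, by omega⟩ : Fin N), (0 : Fin 2)) <;> simp [h1, h2]
      have hsplit : ∀ pqj : Fin N × Fin N × Fin 2,
          (4 * P pqj.1 pqj.2.2 * M pqj.2.1 pqj.2.2 / s pqj.2.2) * v pqj il
          = (4 * P pqj.1 pqj.2.2 * M pqj.2.1 pqj.2.2 / s pqj.2.2)
              * (if il = (pqj.1, pqj.2.2) then (1:ℝ) else 0) / 2
            - (4 * P pqj.1 pqj.2.2 * M pqj.2.1 pqj.2.2 / s pqj.2.2)
              * (if il = (pqj.2.1, pqj.2.2) then (1:ℝ) else 0) / 2 := by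
        intro pqj
        by_cases hd : pqj.1 = pqj.2.1
        · have h0 : P pqj.1 pqj.2.2 * M pqj.2.1 pqj.2.2 = 0 := by
            rw [hd]; exact hPMzero _ _
          rw [mul_assoc, h0]
          simp
        · rw [hvdef]
          dsimp only
          by_cases h1 : il = (pqj.1, pqj.2.2)
          · have h2 : il ≠ (pqj.2.1, pqj.2.2) := by
              rw [h1]
              intro hh
              exact hd (congrArg Prod.fst hh)
            simp only [if_pos h1, if_neg h2]
            ring
          · by_cases h2 : il = (pqj.2.1, pqj.2.2)
            · simp only [if_neg h1, if_pos h2]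
              ring
            · simp only [if_neg h1, if_neg h2]
              ring
      rw [Finset.sum_congr rfl (fun pqj _ => hsplit pqj), Finset.sum_sub_distrib]
      -- first indicator sum
      have hA : ∑ pqj : Fin N × Fin N × Fin 2,
          (4 * P pqj.1 pqj.2.2 * M pqj.2.1 pqj.2.2 / s pqj.2.2)
            * (if il = (pqj.1, pqj.2.2) then (1:ℝ) else 0) / 2 = P il.1 il.2 := by
        rw [Fintype.sum_prod_type]
        have inner : ∀ p : Fin N, ∑ qj : Fin N × Fin 2,
            (4 * P p qj.2 * M qj.1 qj.2 / s qj.2) * (if il = (p, qj.2) then (1:ℝ) else 0) / 2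
            = if il.1 = p then (∑ q, 4 * P p il.2 * M q il.2 / s il.2) / 2 else 0 := by
          intro p
          rw [Fintype.sum_prod_type]
          have innerj : ∀ q : Fin N, ∑ j : Fin 2,
              (4 * P p j * M q j / s j) * (if il = (p, j) then (1:ℝ) else 0) / 2
              = if il.1 = p then (4 * P p il.2 * M q il.2 / s il.2) / 2 else 0 := by
            intro q
            by_cases hp : il.1 = p
            · rw [if_pos hp]
              rw [Finset.sum_eq_single il.2]
              · have he : il = (p, il.2) := by rw [← hp]
                rw [if_pos he, mul_one]
              · intro j _ hj
                rw [if_neg (fun h => hj (by rw [h])), mul_zero, zero_div]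
              · intro h
                exact absurd (Finset.mem_univ _) h
            · rw [if_neg hp]
              apply Finset.sum_eq_zero
              intro j _
              rw [if_neg (fun h => hp (by rw [h])), mul_zero, zero_div]
          rw [Finset.sum_congr rfl (fun q _ => innerj q)]
          by_cases hp : il.1 = p
          · simp only [hp, if_true]
            rw [← Finset.sum_div]
          · simp [hp]
        rw [Finset.sum_congr rfl (fun p _ => inner p),
          Finset.sum_ite_eq Finset.univ il.1
            (fun p => (∑ q, 4 * P p il.2 * M q il.2 / s il.2) / 2)]
        simp only [Finset.mem_univ, if_true]
        rw [hkeyP il.2 il.1]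
        ring
      have hB : ∑ pqj : Fin N × Fin N × Fin 2,
          (4 * P pqj.1 pqj.2.2 * M pqj.2.1 pqj.2.2 / s pqj.2.2)
            * (if il = (pqj.2.1, pqj.2.2) then (1:ℝ) else 0) / 2 = M il.1 il.2 := by
        rw [Fintype.sum_prod_type]
        have inner : ∀ p : Fin N, ∑ qj : Fin N × Fin 2,
            (4 * P p qj.2 * M qj.1 qj.2 / s qj.2) * (if il = (qj.1, qj.2) then (1:ℝ) else 0) / 2
            = (4 * P p il.2 * M il.1 il.2 / s il.2) / 2 := by
          intro p
          rw [Fintype.sum_prod_type]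
          have innerj : ∀ q : Fin N, ∑ j : Fin 2,
              (4 * P p j * M q j / s j) * (if il = (q, j) then (1:ℝ) else 0) / 2
              = if il.1 = q then (4 * P p il.2 * M q il.2 / s il.2) / 2 else 0 := by
            intro q
            by_cases hq : il.1 = q
            · rw [if_pos hq]
              rw [Finset.sum_eq_single il.2]
              · have he : il = (q, il.2) := by rw [← hq]
                rw [if_pos he, mul_one]
              · intro j _ hj
                rw [if_neg (fun h => hj (by rw [h])), mul_zero, zero_div]
              · intro h
                exact absurd (Finset.mem_univ _) h
            · rw [if_neg hq]
              apply Finset.sum_eq_zero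
              intro j _
              rw [if_neg (fun h => hq (by rw [h])), mul_zero, zero_div]
          rw [Finset.sum_congr rfl (fun q _ => innerj q),
            Finset.sum_ite_eq Finset.univ il.1
              (fun q => (4 * P p il.2 * M q il.2 / s il.2) / 2)]
          simp only [Finset.mem_univ, if_true]
        rw [Finset.sum_congr rfl (fun p _ => inner p), ← Finset.sum_div]
        rw [hkeyM il.2 il.1]
        ring
      rw [hA, hB]
      have hpad0 : (1 - t) / 2 * v c₁ il + (1 - t) / 2 * v c₂ il = 0 := by
        rw [← mul_add, hpadv, mul_zero]
      have hx' : P il.1 il.2 - M il.1 il.2 = x il := hPM1 il.1 il.2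
      linarith [hpad0, hx']
    rw [← hxeq]
    exact hmem
  · apply convexHull_min
    · -- vertices lie in the intersection
      rintro v ⟨p, q, j, hpq, rfl⟩
      constructor
      · simp only [crossPolytope2, Set.mem_setOf_eq]
        have hne : ((p, j) : Fin N × Fin 2) ≠ (q, j) := by
          simp [Prod.ext_iff, hpq]
        have h : ∀ il : Fin N × Fin 2,
            |if il = (p, j) then (1 / 2 : ℝ) else if il = (q, j) then -(1 / 2 : ℝ) else 0|
            = (if il = (p, j) then (1/2 : ℝ) else 0) + (if il = (q, j) then (1/2 : ℝ) else 0) := by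
          intro il
          by_cases h1 : il = (p, j)
          · have h2 : il ≠ (q, j) := fun h2 => hne (h1 ▸ h2)
            simp [h1, h2, hpq, hpq.symm]
          · by_cases h2 : il = (q, j) <;> simp [h1, h2, hpq, hpq.symm] <;> norm_num
        rw [Finset.sum_congr rfl (fun il _ => h il), Finset.sum_add_distrib]
        rw [Finset.sum_ite_eq' Finset.univ, Finset.sum_ite_eq' Finset.univ]
        simp
        norm_num
      · intro l
        simp only [subspaceHbar, Set.mem_setOf_eq]
        have h : ∀ i : Fin N,
            (if ((i, l) : Fin N × Fin 2) = (p, j) then (1 / 2 : ℝ) else if ((i,l) : Fin N × Fin 2) = (q, j) then -(1 / 2 : ℝ) else 0)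
            = (if l = j then ((if i = p then (1/2:ℝ) else 0) + (if i = q then -(1/2:ℝ) else 0)) else 0) := by
          intro i
          by_cases hl : l = j
          · subst hl
            by_cases h1 : i = p <;> by_cases h2 : i = q <;> simp_all [Prod.ext_iff]
          · simp [Prod.ext_iff, hl]
        rw [Finset.sum_congr rfl (fun i _ => h i)]
        by_cases hl : l = j
        · simp [hl, Finset.sum_add_distrib, Finset.sum_ite_eq]
        · simp [hl]
    · -- the intersection is convex
      apply Convex.inter
      · intro x hx y hy a b ha hb hab
        simp only [crossPolytope2, Set.mem_setOf_eq] at *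
        calc ∑ il, |(a • x + b • y) il| ≤ ∑ il, (a * |x il| + b * |y il|) := by
              apply Finset.sum_le_sum
              intro il _
              simp only [Pi.add_apply, Pi.smul_apply, smul_eq_mul]
              calc |a * x il + b * y il| ≤ |a * x il| + |b * y il| := abs_add_le _ _
                _ = a * |x il| + b * |y il| := by
                    rw [abs_mul, abs_mul, abs_of_nonneg ha, abs_of_nonneg hb]
          _ = a * ∑ il, |x il| + b * ∑ il, |y il| := by
              rw [Finset.sum_add_distrib, Finset.mul_sum, Finset.mul_sum]
          _ ≤ a * 1 + b * 1 := by
              apply add_le_add (mul_le_mul_of_nonneg_left hx ha) (mul_le_mul_of_nonneg_left hy hb)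
          _ = 1 := by linarith
      · intro x hx y hy a b ha hb hab
        simp only [subspaceHbar, Set.mem_setOf_eq] at *
        intro j
        simp only [Pi.add_apply, Pi.smul_apply, smul_eq_mul]
        rw [Finset.sum_add_distrib, ← Finset.mul_sum, ← Finset.mul_sum, hx j, hy j]
        ring
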